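/- If Y has the χ₃ distribution (density (√(2/π))·y²·e^{-y²/2} on y > 0) and U is uniform on [-1,1], with Y and U independent, then X = YU has the standard normal distribution. -/

import Mathlib

open MeasureTheory ProbabilityTheory Real Set

/-- The chi distribution with 3 degrees of freedom, as a measure on ℝ. -/
noncomputable def chi3 : Measure ℝ :=
  volume.withDensity (fun y =>
    ENNReal.ofReal (if 0 < y then Real.sqrt (2 / Real.pi) * y ^ 2 * Real.exp (-y ^ 2 / 2) else 0))

/-- The uniform distribution on [-1, 1]. -/
noncomputable def unif : Measure ℝ := (2 : ENNReal)⁻¹ • volume.restrict (Set.Icc (-1 : ℝ) 1)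

instance : IsProbabilityMeasure unif := by
  constructor
  simp only [unif, Measure.smul_apply, Measure.restrict_apply MeasurableSet.univ, Set.univ_inter,
    Real.volume_Icc, smul_eq_mul]
  norm_num
  exact ENNReal.inv_mul_cancel two_ne_zero ENNReal.ofNat_ne_top

lemma sqrt_const_eq : Real.sqrt (2 / Real.pi) / 2 = (Real.sqrt (2 * Real.pi))⁻¹ := by
  have hπ : 0 < Real.pi := Real.pi_pos
  have h1 : Real.sqrt (2 / Real.pi) * Real.sqrt (2 * Real.pi) = 2 := by
    rw [← Real.sqrt_mul (by positivity)]
    rw [show 2 / Real.pi * (2 * Real.pi) = 2 ^ 2 by field_simp]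
    exact Real.sqrt_sq (by norm_num)
  have h2 : 0 < Real.sqrt (2 * Real.pi) := Real.sqrt_pos.mpr (by positivity)
  rw [inv_eq_one_div, div_eq_div_iff (by norm_num) (ne_of_gt h2)]
  linarith [h1]

lemma inner_lintegral (a c : ℝ) (ha : 0 ≤ a) (hc : 0 ≤ c) :
    ∫⁻ y in Set.Ioi a, ENNReal.ofReal (c * y * Real.exp (-y ^ 2 / 2)) =
      ENNReal.ofReal (c * Real.exp (-a ^ 2 / 2)) := by
  set φ : ℝ → ℝ := fun y => c * y * Real.exp (-y ^ 2 / 2) with hφ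
  set Φ : ℝ → ℝ := fun y => -(c * Real.exp (-y ^ 2 / 2)) with hΦ
  have hderiv : ∀ y ∈ Set.Ici a, HasDerivAt Φ (φ y) y := by
    intro y _
    have h1 : HasDerivAt (fun y : ℝ => -y ^ 2 / 2) (-y) y := by
      have := ((hasDerivAt_pow 2 y).neg.div_const 2)
      refine this.congr_deriv ?_
      push_cast
      ring
    have h2 := (h1.exp.const_mul c).neg
    refine h2.congr_deriv ?_
    simp only [hφ]
    ring
  have htend : Filter.Tendsto Φ Filter.atTop (nhds 0) := by
    have h3 : Filter.Tendsto (fun y : ℝ => -y ^ 2 / 2) Filter.atTop Filter.atBot := by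
      apply Filter.Tendsto.atBot_div_const (by norm_num : (0:ℝ) < 2)
      exact Filter.tendsto_neg_atTop_atBot.comp (Filter.tendsto_pow_atTop two_ne_zero)
    have h4 := (Real.tendsto_exp_atBot.comp h3).const_mul c
    simpa [hΦ] using h4.neg
  have hnonneg : ∀ y ∈ Set.Ioi a, 0 ≤ φ y := by
    intro y hy
    have hy0 : 0 ≤ y := le_trans ha (le_of_lt hy.out)
    positivity
  have hint : IntegrableOn φ (Set.Ioi a) :=
    integrableOn_Ioi_deriv_of_nonneg' hderiv hnonneg htend
  have hreal : ∫ y in Set.Ioi a, φ y = c * Real.exp (-a ^ 2 / 2) := by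
    rw [integral_Ioi_of_hasDerivAt_of_tendsto' hderiv hint htend]
    simp [hΦ]
  rw [← ofReal_integral_eq_lintegral_ofReal hint
    ((ae_restrict_iff' measurableSet_Ioi).mpr (Filter.Eventually.of_forall hnonneg)), hreal]

/-- Auxiliary kernel. -/
noncomputable def G (s : Set ℝ) : ℝ → ℝ → ENNReal := fun y x =>
  Set.indicator {q : ℝ × ℝ | |q.2| ≤ q.1}
    (fun q => ENNReal.ofReal (Real.sqrt (2 / Real.pi) / 2 * q.1 * Real.exp (-q.1 ^ 2 / 2)))
    (y, x) * Set.indicator s 1 x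

lemma key : (chi3.prod unif).map (fun p : ℝ × ℝ => p.1 * p.2) = gaussianReal 0 1 := by
  have hmul : Measurable fun p : ℝ × ℝ => p.1 * p.2 := measurable_fst.mul measurable_snd
  ext s hs
  rw [Measure.map_apply hmul hs, gaussianReal_of_var_ne_zero 0 one_ne_zero,
    withDensity_apply _ hs]
  have hT : MeasurableSet ((fun p : ℝ × ℝ => p.1 * p.2) ⁻¹' s) := hmul hs
  rw [Measure.prod_apply hT]
  unfold chi3
  have hf : Measurable fun y : ℝ =>
      ENNReal.ofReal (if 0 < y then Real.sqrt (2 / Real.pi) * y ^ 2 * Real.exp (-y ^ 2 / 2) else 0) := by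
    apply Measurable.ennreal_ofReal
    exact Measurable.ite (measurableSet_lt measurable_const measurable_id)
      (by fun_prop) measurable_const
  rw [lintegral_withDensity_eq_lintegral_mul _ hf (measurable_measure_prodMk_left hT)]
  simp only [Pi.mul_apply]
  -- step 1: pointwise rewrite of the integrand as ∫⁻ x, G s y x
  have hA : ∀ y : ℝ,
      (ENNReal.ofReal (if 0 < y then Real.sqrt (2 / Real.pi) * y ^ 2 * Real.exp (-y ^ 2 / 2) else 0))
        * unif (Prod.mk y ⁻¹' ((fun p : ℝ × ℝ => p.1 * p.2) ⁻¹' s))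
      = ∫⁻ x, G s y x := by
    intro y
    by_cases hy : 0 < y
    · rw [if_pos hy]
      have hy' : y ≠ 0 := ne_of_gt hy
      have hpre : Prod.mk y ⁻¹' ((fun p : ℝ × ℝ => p.1 * p.2) ⁻¹' s) = (fun u => y * u) ⁻¹' s := rfl
      have hmy : Measurable fun u : ℝ => y * u := measurable_const_mul y
      have hset : ((fun u => y * u) ⁻¹' s) ∩ Set.Icc (-1 : ℝ) 1
          = (fun u => y * u) ⁻¹' (s ∩ Set.Icc (-y) y) := by
        ext u
        simp only [Set.mem_inter_iff, Set.mem_preimage, Set.mem_Icc]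
        constructor
        · rintro ⟨h1, h2, h3⟩; exact ⟨h1, by nlinarith, by nlinarith⟩
        · rintro ⟨h1, h2, h3⟩
          refine ⟨h1, ?_, ?_⟩ <;> nlinarith
      have hvol : volume ((fun u => y * u) ⁻¹' (s ∩ Set.Icc (-y) y))
          = ENNReal.ofReal y⁻¹ * volume (s ∩ Set.Icc (-y) y) := by
        rw [← Measure.map_apply hmy (hs.inter measurableSet_Icc),
          Real.map_volume_mul_left (ne_of_gt hy)]
        simp [abs_of_pos (inv_pos.mpr hy)]
      have hunif : unif (Prod.mk y ⁻¹' ((fun p : ℝ × ℝ => p.1 * p.2) ⁻¹' s))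
          = 2⁻¹ * (ENNReal.ofReal y⁻¹ * volume (s ∩ Set.Icc (-y) y)) := by
        rw [hpre]
        simp only [unif, Measure.smul_apply, smul_eq_mul,
          Measure.restrict_apply (hmy hs), hset, hvol]
      rw [hunif]
      have hGval : ∀ x : ℝ, G s y x
          = ENNReal.ofReal (Real.sqrt (2 / Real.pi) / 2 * y * Real.exp (-y ^ 2 / 2))
            * (s ∩ Set.Icc (-y) y).indicator 1 x := by
        intro x
        by_cases h1 : x ∈ Set.Icc (-y) y
        · have hm : (y, x) ∈ {q : ℝ × ℝ | |q.2| ≤ q.1} := by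
            simpa [abs_le] using Set.mem_Icc.mp h1
          by_cases h2 : x ∈ s
          · simp only [G, Set.indicator_of_mem hm, Set.indicator_of_mem h2,
              Set.indicator_of_mem (Set.mem_inter h2 h1), Pi.one_apply]
          · simp only [G, Set.indicator_of_notMem h2,
              Set.indicator_of_notMem (fun h : x ∈ s ∩ _ => h2 h.1), mul_zero]
        · have hm : (y, x) ∉ {q : ℝ × ℝ | |q.2| ≤ q.1} :=
            fun h => h1 (Set.mem_Icc.mpr (abs_le.mp h))
          simp only [G, Set.indicator_of_notMem hm,
            Set.indicator_of_notMem (fun h : x ∈ s ∩ _ => h1 h.2), zero_mul, mul_zero]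
      rw [lintegral_congr hGval, lintegral_const_mul _
        (measurable_one.indicator (hs.inter measurableSet_Icc)),
        lintegral_indicator_one (hs.inter measurableSet_Icc)]
      rw [show (2 : ENNReal)⁻¹ = ENNReal.ofReal 2⁻¹ by
        rw [ENNReal.ofReal_inv_of_pos (by norm_num), ENNReal.ofReal_ofNat]]
      rw [← mul_assoc, ← mul_assoc, ← ENNReal.ofReal_mul (by positivity),
        ← ENNReal.ofReal_mul (by positivity)]
      congr 2
      field_simp
    · rw [if_neg hy]
      simp only [ENNReal.ofReal_zero, zero_mul]
      have hG0 : ∀ x : ℝ, G s y x = 0 := by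
        intro x
        by_cases hx : |x| ≤ y
        · have hy0 : y = 0 := le_antisymm (not_lt.mp hy) (le_trans (abs_nonneg x) hx)
          subst hy0
          simp only [G, Set.indicator_apply]
          split <;> simp
        · simp only [G, Set.indicator_apply, Set.mem_setOf_eq, if_neg hx, zero_mul]
      rw [lintegral_congr hG0, lintegral_zero]
  rw [lintegral_congr hA]
  -- step 2: Tonelli
  have hGmeas : Measurable (Function.uncurry (G s)) := by
    apply Measurable.mul
    · apply Measurable.indicator
      · fun_prop
      · exact measurableSet_le (measurable_snd.abs) measurable_fst
    · exact (measurable_one.indicator hs).comp measurable_snd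
  rw [lintegral_lintegral_swap hGmeas.aemeasurable]
  -- step 3: inner integral
  have hB : ∀ x : ℝ, (∫⁻ y, G s y x) = Set.indicator s (gaussianPDF 0 1) x := by
    intro x
    have hGx : ∀ y : ℝ, G s y x
        = (Set.Ici |x|).indicator
            (fun y => ENNReal.ofReal (Real.sqrt (2 / Real.pi) / 2 * y * Real.exp (-y ^ 2 / 2))) y
          * Set.indicator s 1 x := by
      intro y
      simp only [G, Set.indicator_apply, Set.mem_setOf_eq, Set.mem_Ici]
    rw [lintegral_congr hGx, lintegral_mul_const _
      (Measurable.indicator (by fun_prop) measurableSet_Ici),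
      lintegral_indicator measurableSet_Ici, ← restrict_Ioi_eq_restrict_Ici,
      inner_lintegral |x| _ (abs_nonneg x) (by positivity), sq_abs]
    by_cases hx : x ∈ s
    · rw [Set.indicator_of_mem hx, Set.indicator_of_mem hx, Pi.one_apply, mul_one]
      rw [gaussianPDF]
      congr 1
      rw [gaussianPDFReal, sqrt_const_eq]
      norm_num
    · rw [Set.indicator_of_notMem hx, Set.indicator_of_notMem hx, mul_zero]
  rw [lintegral_congr hB]
  exact lintegral_indicator hs _

theorem khintchine_normal {Ω : Type*} [MeasureSpace Ω] (μ : Measure Ω) [IsProbabilityMeasure μ]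
    (Y U : Ω → ℝ) (hY : Measurable Y) (hU : Measurable U)
    (hind : IndepFun Y U μ)
    (hYlaw : μ.map Y = chi3) (hUlaw : μ.map U = unif) :
    μ.map (fun ω => Y ω * U ω) = gaussianReal 0 1 := by
  have hpair := (indepFun_iff_map_prod_eq_prod_map_map hY.aemeasurable hU.aemeasurable).mp hind
  have hmul : Measurable fun p : ℝ × ℝ => p.1 * p.2 := measurable_fst.mul measurable_snd
  have : μ.map (fun ω => Y ω * U ω)
      = (μ.map (fun ω => (Y ω, U ω))).map (fun p : ℝ × ℝ => p.1 * p.2) := by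
    rw [Measure.map_map hmul (hY.prodMk hU)]
    rfl
  rw [this, hpair, hYlaw, hUlaw, key]
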